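/- Let W' be a finite set of size m and consider the Erdős–Rényi random graph G(W', p) with p = n^{-4/5}, m ≤ n^{3/5}. The probability that every vertex of W' has positive degree is at most (e·m·n^{-4/5})^{m/2} ≤ n^{-m/12} for n sufficiently large. -/

import Mathlib

open MeasureTheory ENNReal Finset

lemma aux_pow_le_exp_mul_factorial (k : ℕ) : (k:ℝ)^k ≤ Real.exp 1 ^ k * k.factorial := by
  have h : (k:ℝ)^k / k.factorial ≤ Real.exp k := by
    calc (k:ℝ)^k / k.factorial
        ≤ ∑ i ∈ Finset.range (k+1), (k:ℝ)^i / i.factorial := by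
          refine Finset.single_le_sum (f := fun i => (k:ℝ)^i / i.factorial) ?_
            (Finset.self_mem_range_succ k)
          intro i _; positivity
      _ ≤ Real.exp k := Real.sum_le_exp_of_nonneg (Nat.cast_nonneg k) _
  have hfac : (0:ℝ) < k.factorial := by positivity
  have h2 := (div_le_iff₀ hfac).mp h
  calc (k:ℝ)^k ≤ Real.exp k * k.factorial := h2
    _ = Real.exp 1 ^ k * k.factorial := by
        rw [← Real.exp_nat_mul]; norm_num

lemma aux_sym2_filter_card_le {α : Type*} [Fintype α] [DecidableEq α] (z : Sym2 α) :
    (Finset.univ.filter (fun v => v ∈ z)).card ≤ 2 := by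
  induction z using Sym2.ind with
  | _ a b =>
    have hsub : Finset.univ.filter (fun v => v ∈ s(a,b)) ⊆ {a, b} := by
      intro v hv
      simp only [Finset.mem_filter, Sym2.mem_iff] at hv
      simp only [Finset.mem_insert, Finset.mem_singleton]
      tauto
    exact (Finset.card_le_card hsub).trans ((Finset.card_insert_le _ _).trans (by simp))

lemma aux_event_subset (m : ℕ) :
    {ω : {e : Sym2 (Fin m) // ¬ e.IsDiag} → Bool |
        ∀ v : Fin m, ∃ e, v ∈ e.1 ∧ ω e = true}
    ⊆ ⋃ S ∈ Finset.powersetCard ((m+1)/2)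
          (Finset.univ : Finset {e : Sym2 (Fin m) // ¬ e.IsDiag}),
        {ω | ∀ e ∈ S, ω e = true} := by
  classical
  intro ω hω
  set F : Finset {e : Sym2 (Fin m) // ¬ e.IsDiag} :=
    Finset.univ.filter (fun e => ω e = true) with hF
  have hcard : m ≤ 2 * F.card := by
    have hsub : (Finset.univ : Finset (Fin m)) ⊆
        F.biUnion (fun e => Finset.univ.filter (fun v => v ∈ e.1)) := by
      intro v _
      obtain ⟨e, hv, he⟩ := hω v
      exact Finset.mem_biUnion.mpr ⟨e, by simp [hF, he], by simp [hv]⟩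
    calc m = (Finset.univ : Finset (Fin m)).card := by simp
      _ ≤ (F.biUnion (fun e => Finset.univ.filter (fun v => v ∈ e.1))).card :=
          Finset.card_le_card hsub
      _ ≤ ∑ e ∈ F, (Finset.univ.filter (fun v => v ∈ e.1)).card := Finset.card_biUnion_le
      _ ≤ ∑ _e ∈ F, 2 := Finset.sum_le_sum (fun e _ => aux_sym2_filter_card_le e.1)
      _ = 2 * F.card := by rw [Finset.sum_const, smul_eq_mul, mul_comm]
  have hk : (m+1)/2 ≤ F.card := by omega
  obtain ⟨S, hSF, hScard⟩ := Finset.exists_subset_card_eq hk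
  refine Set.mem_biUnion (Finset.mem_powersetCard.mpr ⟨Finset.subset_univ _, hScard⟩) ?_
  intro e he
  have := hSF he
  simpa [hF] using this

lemma aux_cylinder_measure {m : ℕ} (p : ℝ≥0∞) (hp : p ≤ 1)
    (S : Finset {e : Sym2 (Fin m) // ¬ e.IsDiag}) :
    (Measure.pi (fun _ : {e : Sym2 (Fin m) // ¬ e.IsDiag} =>
        (PMF.bernoulli p.toNNReal (by simpa using ENNReal.toNNReal_mono ENNReal.one_ne_top hp)).toMeasure))
      {ω : {e : Sym2 (Fin m) // ¬ e.IsDiag} → Bool | ∀ e ∈ S, ω e = true}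
      = p ^ S.card := by
  classical
  have hSet : {ω : {e : Sym2 (Fin m) // ¬ e.IsDiag} → Bool | ∀ e ∈ S, ω e = true}
      = Set.pi Set.univ (fun e => if e ∈ S then {true} else Set.univ) := by
    ext ω
    simp only [Set.mem_pi, Set.mem_univ, Set.mem_setOf_eq, forall_true_left]
    constructor
    · intro h e
      split_ifs with he
      · exact h e he
      · trivial
    · intro h e he
      have := h e
      rwa [if_pos he] at this
  rw [hSet, Measure.pi_pi]
  have heval : ∀ e : {e : Sym2 (Fin m) // ¬ e.IsDiag},
      (PMF.bernoulli p.toNNReal (by simpa using ENNReal.toNNReal_mono ENNReal.one_ne_top hp)).toMeasure (if e ∈ S then ({true} : Set Bool) else Set.univ)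
        = if e ∈ S then p else 1 := by
    intro e
    split_ifs with he
    · rw [PMF.toMeasure_apply_singleton _ _ (measurableSet_singleton _)]
      exact (PMF.bernoulli_apply _ true).trans (ENNReal.coe_toNNReal (ne_top_of_le_ne_top one_ne_top hp))
    · exact measure_univ
  simp_rw [heval]
  rw [Finset.prod_ite_mem, Finset.univ_inter, Finset.prod_const]

open MeasureTheory ENNReal in
theorem stmt_18 :
    ∃ N : ℕ, ∀ n : ℕ, N ≤ n → ∀ m : ℕ, 1 ≤ m → (m : ℝ) ≤ (n : ℝ) ^ ((3:ℝ)/5) →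
      ∀ hp : (((n : ℝ≥0∞) ^ (-(4:ℝ)/5)) ≤ 1),
        ((Measure.pi (fun _ : {e : Sym2 (Fin m) // ¬ e.IsDiag} =>
              (PMF.bernoulli ((n : ℝ≥0∞) ^ (-(4:ℝ)/5)).toNNReal
                (by simpa using ENNReal.toNNReal_mono ENNReal.one_ne_top hp)).toMeasure))
            {ω : {e : Sym2 (Fin m) // ¬ e.IsDiag} → Bool |
              ∀ v : Fin m, ∃ e, v ∈ e.1 ∧ ω e = true}).toReal
          ≤ (Real.exp 1 * m * (n : ℝ) ^ (-(4:ℝ)/5)) ^ ((m : ℝ)/2) ∧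
        (Real.exp 1 * m * (n : ℝ) ^ (-(4:ℝ)/5)) ^ ((m : ℝ)/2) ≤ (n : ℝ) ^ (-(m : ℝ)/12) := by
  classical
  refine ⟨3^30, fun n hn m hm hmn hp => ?_⟩
  set k : ℕ := (m+1)/2 with hkdef
  have hn1 : (1:ℝ) ≤ (n:ℝ) := by
    have : (1:ℕ) ≤ n := le_trans (by norm_num) hn
    exact_mod_cast this
  have hn0 : (0:ℝ) < (n:ℝ) := lt_of_lt_of_le one_pos hn1
  set pr : ℝ := (n:ℝ) ^ (-(4:ℝ)/5) with hprdef
  have hpr0 : 0 < pr := Real.rpow_pos_of_pos hn0 _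
  -- exp 1 ≤ n ^ (1/30)
  have hexp3 : Real.exp 1 ≤ 3 := by
    have := Real.exp_one_lt_d9
    norm_num at this ⊢
    linarith
  have h3n : (3:ℝ) ≤ (n:ℝ) ^ ((1:ℝ)/30) := by
    have hcast : ((3:ℝ)^(30:ℕ)) ≤ (n:ℝ) := by exact_mod_cast hn
    calc (3:ℝ) = ((3:ℝ)^(30:ℕ)) ^ ((1:ℝ)/30) := by
          rw [← Real.rpow_natCast 3 30, ← Real.rpow_mul (by norm_num)]
          norm_num
      _ ≤ (n:ℝ) ^ ((1:ℝ)/30) :=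
          Real.rpow_le_rpow (by positivity) hcast (by norm_num)
  have hexp : Real.exp 1 ≤ (n:ℝ) ^ ((1:ℝ)/30) := hexp3.trans h3n
  -- base bound : exp 1 * m * pr ≤ n ^ (-1/6)
  have hbase : Real.exp 1 * m * pr ≤ (n:ℝ) ^ (-(1:ℝ)/6) := by
    have h1 : Real.exp 1 * m * pr ≤ ((n:ℝ) ^ ((1:ℝ)/30)) * ((n:ℝ) ^ ((3:ℝ)/5)) * pr := by
      have hm0 : (0:ℝ) ≤ m := Nat.cast_nonneg m
      have := mul_le_mul hexp hmn hm0 (by positivity : (0:ℝ) ≤ (n:ℝ) ^ ((1:ℝ)/30))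
      exact mul_le_mul_of_nonneg_right this (le_of_lt hpr0)
    calc Real.exp 1 * m * pr ≤ ((n:ℝ) ^ ((1:ℝ)/30)) * ((n:ℝ) ^ ((3:ℝ)/5)) * pr := h1
      _ = (n:ℝ) ^ ((1:ℝ)/30 + (3:ℝ)/5 + -(4:ℝ)/5) := by
          rw [hprdef, ← Real.rpow_add hn0, ← Real.rpow_add hn0]
      _ = (n:ℝ) ^ (-(1:ℝ)/6) := by norm_num
  have hbase1 : Real.exp 1 * m * pr ≤ 1 :=
    hbase.trans (Real.rpow_le_one_of_one_le_of_nonpos hn1 (by norm_num))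
  have hbase0 : 0 < Real.exp 1 * m * pr := by
    have : (0:ℝ) < m := by exact_mod_cast hm
    positivity
  have hm2k : (m:ℝ)/2 ≤ (k:ℕ) := by
    have : m ≤ 2 * k := by omega
    have h' : (m:ℝ) ≤ 2 * k := by exact_mod_cast this
    linarith
  constructor
  · -- measure bound
    set μ := Measure.pi (fun _ : {e : Sym2 (Fin m) // ¬ e.IsDiag} =>
        (PMF.bernoulli ((n : ℝ≥0∞) ^ (-(4:ℝ)/5)).toNNReal
          (by simpa using ENNReal.toNNReal_mono ENNReal.one_ne_top hp)).toMeasure) with hμ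
    set p : ℝ≥0∞ := (n : ℝ≥0∞) ^ (-(4:ℝ)/5) with hpdef
    have hE : Fintype.card {e : Sym2 (Fin m) // ¬ e.IsDiag} = m.choose 2 := by
      rw [Sym2.card_subtype_not_diag, Fintype.card_fin]
    have key : μ {ω : {e : Sym2 (Fin m) // ¬ e.IsDiag} → Bool |
          ∀ v : Fin m, ∃ e, v ∈ e.1 ∧ ω e = true}
        ≤ ((m.choose 2).choose k : ℝ≥0∞) * p ^ k := by
      calc μ _ ≤ μ (⋃ S ∈ Finset.powersetCard k
              (Finset.univ : Finset {e : Sym2 (Fin m) // ¬ e.IsDiag}),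
              {ω | ∀ e ∈ S, ω e = true}) := measure_mono (aux_event_subset m)
        _ ≤ ∑ S ∈ Finset.powersetCard k
              (Finset.univ : Finset {e : Sym2 (Fin m) // ¬ e.IsDiag}),
              μ {ω | ∀ e ∈ S, ω e = true} := measure_biUnion_finset_le _ _
        _ = ∑ S ∈ Finset.powersetCard k
              (Finset.univ : Finset {e : Sym2 (Fin m) // ¬ e.IsDiag}), p ^ k := by
            refine Finset.sum_congr rfl (fun S hS => ?_)
            rw [hμ, aux_cylinder_measure p hp S, (Finset.mem_powersetCard.mp hS).2]
        _ = ((m.choose 2).choose k : ℝ≥0∞) * p ^ k := by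
            rw [Finset.sum_const, Finset.card_powersetCard, Finset.card_univ, hE,
              nsmul_eq_mul]
    have hpne : p ≠ ∞ := ne_top_of_le_ne_top one_ne_top hp
    have hfin : (((m.choose 2).choose k : ℝ≥0∞) * p ^ k) ≠ ∞ :=
      ENNReal.mul_ne_top (natCast_ne_top _) (ENNReal.pow_ne_top hpne)
    have htr := ENNReal.toReal_mono hfin key
    have hptr : p.toReal = pr := by
      rw [hpdef, hprdef, ← ENNReal.toReal_rpow]
      simp
    rw [ENNReal.toReal_mul, ENNReal.toReal_pow, hptr] at htr
    rw [show ((((m.choose 2).choose k : ℕ) : ℝ≥0∞)).toReal = (((m.choose 2).choose k : ℕ) : ℝ) by simp] at htr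
    -- now real side
    have hEk : m.choose 2 ≤ m * k := by
      rw [Nat.choose_two_right]
      have h1 : m * (m-1) ≤ m * (2*k) := Nat.mul_le_mul_left m (by omega)
      have h2 : m * (m-1) / 2 ≤ m * (2*k) / 2 := Nat.div_le_div_right h1
      have h3 : m * (2*k) / 2 = m * k := by
        rw [show m * (2*k) = 2 * (m*k) by ring, Nat.mul_div_cancel_left _ (by norm_num)]
      omega
    have hchoose : (((m.choose 2).choose k : ℕ) : ℝ) ≤ (Real.exp 1 * m)^k := by
      calc (((m.choose 2).choose k : ℕ) : ℝ)
          ≤ ((m.choose 2 : ℕ):ℝ)^k / (k.factorial : ℝ) := by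
            exact_mod_cast Nat.choose_le_pow_div k (m.choose 2)
        _ ≤ ((m*k : ℕ):ℝ)^k / (k.factorial : ℝ) := by
            have : ((m.choose 2 : ℕ):ℝ) ≤ ((m*k : ℕ):ℝ) := by exact_mod_cast hEk
            gcongr
        _ = (m:ℝ)^k * (k:ℝ)^k / (k.factorial : ℝ) := by push_cast; ring
        _ ≤ (m:ℝ)^k * (Real.exp 1 ^ k * (k.factorial : ℝ)) / (k.factorial : ℝ) := by
            have := aux_pow_le_exp_mul_factorial k
            gcongr
        _ = (m:ℝ)^k * Real.exp 1 ^ k := by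
            have hfac : ((k.factorial : ℝ)) ≠ 0 := by positivity
            rw [mul_div_assoc, mul_div_cancel_right₀ _ hfac]
        _ = (Real.exp 1 * m)^k := by rw [← mul_pow, mul_comm]
    have hstep : (((m.choose 2).choose k : ℕ) : ℝ) * pr ^ k
        ≤ (Real.exp 1 * m * pr) ^ ((m:ℝ)/2) := by
      calc (((m.choose 2).choose k : ℕ) : ℝ) * pr ^ k
          ≤ (Real.exp 1 * m)^k * pr ^ k :=
            mul_le_mul_of_nonneg_right hchoose (pow_nonneg (le_of_lt hpr0) k)
        _ = (Real.exp 1 * m * pr) ^ k := by ring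
        _ = (Real.exp 1 * m * pr) ^ ((k:ℕ):ℝ) := by
            rw [Real.rpow_natCast]
        _ ≤ (Real.exp 1 * m * pr) ^ ((m:ℝ)/2) :=
            Real.rpow_le_rpow_of_exponent_ge hbase0 hbase1 hm2k
    exact htr.trans hstep
  · -- second inequality
    calc (Real.exp 1 * m * pr) ^ ((m:ℝ)/2)
        ≤ ((n:ℝ) ^ (-(1:ℝ)/6)) ^ ((m:ℝ)/2) :=
          Real.rpow_le_rpow (le_of_lt hbase0) hbase (by positivity)
      _ = (n:ℝ) ^ (-(m:ℝ)/12) := by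
          rw [← Real.rpow_mul (le_of_lt hn0)]
          congr 1
          ring
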